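/- Let H be a complex Hilbert space and let K be a bounded operator on H such that ‖I + K‖ ≤ 1. Then K maps the orthogonal complement of its kernel into itself: for every x ∈ (ker K)^⊥ one has Kx ∈ (ker K)^⊥; consequently (I + K)((ker K)^⊥) ⊆ (ker K)^⊥. -/

import Mathlib

open ContinuousLinearMap in
/-- If `‖I + K‖ ≤ 1`, then `K` maps `(ker K)ᗮ` into itself, and consequently so does
`I + K`. -/
theorem ker_orthogonal_invariant
    {H : Type*} [NormedAddCommGroup H] [InnerProductSpace ℂ H] [CompleteSpace H]
    (K : H →L[ℂ] H) (h : ‖(1 : H →L[ℂ] H) + K‖ ≤ 1) :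
    (∀ x ∈ (LinearMap.ker (K : H →ₗ[ℂ] H))ᗮ, K x ∈ (LinearMap.ker (K : H →ₗ[ℂ] H))ᗮ) ∧
      ∀ x ∈ (LinearMap.ker (K : H →ₗ[ℂ] H))ᗮ, ((1 : H →L[ℂ] H) + K) x ∈ (LinearMap.ker (K : H →ₗ[ℂ] H))ᗮ := by
  set T := (1 : H →L[ℂ] H) + K with hT
  have key : ∀ y : H, K y = 0 → (adjoint K) y = 0 := by
    intro y hy
    have hTy : T y = y := by simp [hT, hy]
    have hnormT : ‖adjoint T‖ = ‖T‖ := LinearIsometryEquiv.norm_map adjoint T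
    have h1 : ‖(adjoint T) y‖ ≤ ‖y‖ := by
      calc ‖(adjoint T) y‖ ≤ ‖adjoint T‖ * ‖y‖ := (adjoint T).le_opNorm y
        _ ≤ 1 * ‖y‖ := by rw [hnormT]; gcongr
        _ = ‖y‖ := one_mul _
    have hinner : RCLike.re (inner ℂ ((adjoint T) y) y : ℂ) = ‖y‖ ^ 2 := by
      rw [adjoint_inner_left, hTy]
      simp [inner_self_eq_norm_sq]
      rw [← Complex.ofReal_pow, Complex.ofReal_re]
    have hzero : ‖(adjoint T) y - y‖ ^ 2 ≤ 0 := by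
      rw [norm_sub_sq (𝕜 := ℂ), hinner]
      nlinarith [norm_nonneg ((adjoint T) y), norm_nonneg y]
    have hTsy : (adjoint T) y = y := by
      have : ‖(adjoint T) y - y‖ = 0 := by nlinarith [norm_nonneg ((adjoint T) y - y)]
      rwa [norm_eq_zero, sub_eq_zero] at this
    have hadj : adjoint T = 1 + adjoint K := by
      rw [hT, map_add]; congr 1; exact adjoint_id
    have := hTsy
    rw [hadj] at this
    simpa using this
  have hK : ∀ x ∈ (LinearMap.ker (K : H →ₗ[ℂ] H))ᗮ, K x ∈ (LinearMap.ker (K : H →ₗ[ℂ] H))ᗮ := by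
    intro x hx
    rw [Submodule.mem_orthogonal]
    intro u hu
    have hu' : K u = 0 := hu
    have : (inner ℂ ((adjoint K) u) x : ℂ) = inner ℂ u (K x) := adjoint_inner_left K x u
    rw [key u hu', inner_zero_left] at this
    exact this.symm
  refine ⟨hK, fun x hx => ?_⟩
  have : ((1 : H →L[ℂ] H) + K) x = x + K x := rfl
  rw [this]
  exact Submodule.add_mem _ hx (hK x hx)
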